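/- Let G and H be finite connected nontrivial simple graphs of order n₁ and n₂ respectively. Then dim_s(G ⊠ H) ≥ max{n₂ · dim_s(G), n₁ · dim_s(H)}. -/

import Mathlib

open SimpleGraph Finset

variable {α β : Type*}

/-- The strong product of two simple graphs: distinct vertices `(a,b)` and `(c,d)` are adjacent
iff (`a = c` or `a ~ c`) and (`b = d` or `b ~ d`). -/
def strongProd (G : SimpleGraph α) (H : SimpleGraph β) : SimpleGraph (α × β) where
  Adj x y := x ≠ y ∧ (x.1 = y.1 ∨ G.Adj x.1 y.1) ∧ (x.2 = y.2 ∨ H.Adj x.2 y.2)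
  symm := by
    refine ⟨?_⟩
    rintro x y ⟨h1, h2, h3⟩
    exact ⟨h1.symm, h2.imp Eq.symm (fun a => a.symm), h3.imp Eq.symm (fun a => a.symm)⟩
  loopless := ⟨fun x h => h.1 rfl⟩

/-- The Cartesian sum (disjunctive product) of two simple graphs. -/
def cartSum (G : SimpleGraph α) (H : SimpleGraph β) : SimpleGraph (α × β) where
  Adj x y := x ≠ y ∧ (G.Adj x.1 y.1 ∨ H.Adj x.2 y.2)
  symm := by
    refine ⟨?_⟩
    rintro x y ⟨h1, h2⟩
    exact ⟨h1.symm, h2.imp (fun a => a.symm) (fun a => a.symm)⟩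
  loopless := ⟨fun x h => h.1 rfl⟩

/-- `u` is maximally distant from `v` in `G`. -/
def MaximallyDistantFrom (G : SimpleGraph α) (u v : α) : Prop :=
  ∀ w, G.Adj u w → G.dist v w ≤ G.dist u v

/-- `u` and `v` are mutually maximally distant in `G`. -/
def MutuallyMaximallyDistant (G : SimpleGraph α) (u v : α) : Prop :=
  MaximallyDistantFrom G u v ∧ MaximallyDistantFrom G v u

/-- The strong resolving graph of `G`. -/
def strongResolvingGraph (G : SimpleGraph α) : SimpleGraph α where
  Adj u v := u ≠ v ∧ MutuallyMaximallyDistant G u v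
  symm := by refine ⟨?_⟩; rintro u v ⟨h1, h2, h3⟩; exact ⟨h1.symm, h3, h2⟩
  loopless := ⟨fun x h => h.1 rfl⟩

/-- A finset of vertices is independent if no two of its (distinct) members are adjacent. -/
def IsIndepFinset (G : SimpleGraph α) (s : Finset α) : Prop :=
  ∀ u ∈ s, ∀ v ∈ s, u ≠ v → ¬ G.Adj u v

/-- The independence number `β(G)`. -/
noncomputable def indepNum (G : SimpleGraph α) [Fintype α] : ℕ :=
  sSup {n | ∃ s : Finset α, IsIndepFinset G s ∧ s.card = n}

/-- `w` strongly resolves `u` and `v` in `G`. -/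
def StronglyResolves (G : SimpleGraph α) (w u v : α) : Prop :=
  G.dist w u = G.dist w v + G.dist v u ∨ G.dist w v = G.dist w u + G.dist u v

/-- A strong metric generator for `G`. -/
def IsStrongMetricGenerator (G : SimpleGraph α) (s : Finset α) : Prop :=
  ∀ u v : α, u ≠ v → ∃ w ∈ s, StronglyResolves G w u v

/-- The strong metric dimension of `G`. -/
noncomputable def sdim (G : SimpleGraph α) [Fintype α] : ℕ :=
  sInf {n | ∃ s : Finset α, IsStrongMetricGenerator G s ∧ s.card = n}

section Aux

variable {G : SimpleGraph α} {H : SimpleGraph β}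

/-- A neighbour of `u` strictly closer to `v`. -/
lemma exists_adj_dist_succ (hc : G.Connected) {u v : α} (h : u ≠ v) :
    ∃ w, G.Adj u w ∧ G.dist w v + 1 = G.dist u v := by
  obtain ⟨p, hp⟩ := hc.exists_walk_length_eq_dist u v
  cases p with
  | nil => exact absurd rfl h
  | cons hadj q =>
    rename_i w
    refine ⟨w, hadj, ?_⟩
    have h1 : G.dist w v ≤ q.length := SimpleGraph.dist_le q
    have h2 : G.dist u v ≤ G.dist u w + G.dist w v := hc.dist_triangle
    have h3 : G.dist u w ≤ 1 := by simpa using SimpleGraph.dist_le hadj.toWalk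
    simp only [SimpleGraph.Walk.length_cons] at hp
    omega

lemma exists_mdf [Fintype α] (hc : G.Connected) :
    ∀ (n : ℕ) (x y : α), Fintype.card α ≤ G.dist y x + n →
      ∃ u, MaximallyDistantFrom G u y ∧ G.dist u y = G.dist u x + G.dist x y := by
  intro n
  induction n with
  | zero =>
    intro x y hcard
    exfalso
    obtain ⟨p, hpath, hp⟩ := hc.exists_path_of_dist y x
    have := hpath.length_lt
    omega
  | succ n ih =>
    intro x y hcard
    by_cases hx : MaximallyDistantFrom G x y
    · exact ⟨x, hx, by simp [SimpleGraph.dist_self]⟩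
    · rw [MaximallyDistantFrom] at hx
      push_neg at hx
      obtain ⟨w, hadj, hlt⟩ := hx
      have h1 : G.dist y w ≤ G.dist y x + G.dist x w := hc.dist_triangle
      have h2 : G.dist x w ≤ 1 := by simpa using SimpleGraph.dist_le hadj.toWalk
      have hcxy : G.dist x y = G.dist y x := SimpleGraph.dist_comm ..
      obtain ⟨u, hu, hequ⟩ := ih w y (by omega)
      refine ⟨u, hu, ?_⟩
      have a1 : G.dist u y ≤ G.dist u x + G.dist x y := hc.dist_triangle
      have a2 : G.dist u x ≤ G.dist u w + G.dist w x := hc.dist_triangle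
      have a3 : G.dist w x ≤ 1 := by simpa using SimpleGraph.dist_le hadj.symm.toWalk
      have a5 : G.dist w y = G.dist y w := SimpleGraph.dist_comm ..
      omega

/-- From any pair `x ≠ y` produce a mutually maximally distant pair through them. -/
lemma exists_mmd_pair [Fintype α] (hc : G.Connected) {x y : α} (hxy : x ≠ y) :
    ∃ u v, u ≠ v ∧ MutuallyMaximallyDistant G u v ∧
      G.dist u y = G.dist u x + G.dist x y ∧ G.dist v x = G.dist v y + G.dist y x := by
  obtain ⟨u, hu, hequ⟩ := exists_mdf hc (Fintype.card α) x y (by omega)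
  obtain ⟨v, hv, heqv⟩ := exists_mdf hc (Fintype.card α) y u (by omega)
  have hcyu : G.dist y u = G.dist u y := SimpleGraph.dist_comm ..
  have hcxy : G.dist x y = G.dist y x := SimpleGraph.dist_comm ..
  have hcux : G.dist u x = G.dist x u := SimpleGraph.dist_comm ..
  have hcuv : G.dist u v = G.dist v u := SimpleGraph.dist_comm ..
  have hposxy : 0 < G.dist x y := hc.pos_dist_of_ne hxy
  have huv : u ≠ v := by
    intro h
    subst h
    have : G.dist u u = 0 := SimpleGraph.dist_self ..
    omega
  have hmdfuv : MaximallyDistantFrom G u v := by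
    intro w hadj
    have t1 : G.dist v w ≤ G.dist v y + G.dist y w := hc.dist_triangle
    have t2 : G.dist y w ≤ G.dist u y := by
      have := hu w hadj
      omega
    omega
  have hvx : G.dist v x = G.dist v y + G.dist y x := by
    have t1 : G.dist v u ≤ G.dist v x + G.dist x u := hc.dist_triangle
    have t2 : G.dist v x ≤ G.dist v y + G.dist y x := hc.dist_triangle
    omega
  exact ⟨u, v, huv, ⟨hmdfuv, hv⟩, hequ, hvx⟩

/-- Helper: if `b` is maximally distant from `a` and `c` sees `b` between itself
and `a`, then `c = b`. -/
lemma resolve_endpoint (hc : G.Connected) {a b c : α}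
    (hmdf : MaximallyDistantFrom G b a)
    (heq : G.dist c a = G.dist c b + G.dist b a) : c = b := by
  by_contra hcb
  obtain ⟨b', hadj, hb'⟩ := exists_adj_dist_succ hc (fun h => hcb h.symm)
  have hmd := hmdf b' hadj
  have t1 : G.dist c a ≤ G.dist c b' + G.dist b' a := hc.dist_triangle
  have c1 : G.dist c b' = G.dist b' c := SimpleGraph.dist_comm ..
  have c2 : G.dist b' a = G.dist a b' := SimpleGraph.dist_comm ..
  have c3 : G.dist b c = G.dist c b := SimpleGraph.dist_comm ..
  have hQ : 0 < G.dist c b := hc.pos_dist_of_ne (fun h => hcb h)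
  omega

/-- Only the two endpoints of a mutually maximally distant pair can strongly resolve it. -/
lemma eq_of_stronglyResolves_mmd (hc : G.Connected) {u v w : α}
    (hmmd : MutuallyMaximallyDistant G u v)
    (hres : StronglyResolves G w u v) : w = u ∨ w = v := by
  rcases hres with h | h
  · exact Or.inr (resolve_endpoint hc hmmd.2 h)
  · exact Or.inl (resolve_endpoint hc hmmd.1 h)

end Aux

section Prod

variable {G : SimpleGraph α} {H : SimpleGraph β}

lemma walk_strongProd (hG : G.Connected) (hH : H.Connected) :
    ∀ (n : ℕ) (a c : α) (b d : β), G.dist a c ≤ n → H.dist b d ≤ n →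
      ∃ p : (strongProd G H).Walk (a, b) (c, d), p.length ≤ n := by
  intro n
  induction n with
  | zero =>
    intro a c b d h1 h2
    have hac : a = c := hG.dist_eq_zero_iff.mp (Nat.le_zero.mp h1)
    have hbd : b = d := hH.dist_eq_zero_iff.mp (Nat.le_zero.mp h2)
    subst hac; subst hbd
    exact ⟨SimpleGraph.Walk.nil, by simp⟩
  | succ n ih =>
    intro a c b d h1 h2
    by_cases hac : a = c
    · subst hac
      by_cases hbd : b = d
      · subst hbd; exact ⟨SimpleGraph.Walk.nil, by simp⟩
      · obtain ⟨b', hb, hbd'⟩ := exists_adj_dist_succ hH hbd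
        obtain ⟨q, hq⟩ := ih a a b' d (by simp [SimpleGraph.dist_self]) (by omega)
        have hadjP : (strongProd G H).Adj (a, b) (a, b') :=
          ⟨fun hcon => hb.ne (congrArg Prod.snd hcon), Or.inl rfl, Or.inr hb⟩
        exact ⟨SimpleGraph.Walk.cons hadjP q,
          by simp only [SimpleGraph.Walk.length_cons]; omega⟩
    · obtain ⟨a', ha, hac'⟩ := exists_adj_dist_succ hG hac
      by_cases hbd : b = d
      · subst hbd
        obtain ⟨q, hq⟩ := ih a' c b b (by omega) (by simp [SimpleGraph.dist_self])
        have hadjP : (strongProd G H).Adj (a, b) (a', b) :=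
          ⟨fun hcon => ha.ne (congrArg Prod.fst hcon), Or.inr ha, Or.inl rfl⟩
        exact ⟨SimpleGraph.Walk.cons hadjP q,
          by simp only [SimpleGraph.Walk.length_cons]; omega⟩
      · obtain ⟨b', hb, hbd'⟩ := exists_adj_dist_succ hH hbd
        obtain ⟨q, hq⟩ := ih a' c b' d (by omega) (by omega)
        have hadjP : (strongProd G H).Adj (a, b) (a', b') :=
          ⟨fun hcon => ha.ne (congrArg Prod.fst hcon), Or.inr ha, Or.inr hb⟩
        exact ⟨SimpleGraph.Walk.cons hadjP q,
          by simp only [SimpleGraph.Walk.length_cons]; omega⟩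

lemma strongProd_connected (hG : G.Connected) (hH : H.Connected) :
    (strongProd G H).Connected := by
  rw [SimpleGraph.connected_iff]
  constructor
  · intro x y
    obtain ⟨p, -⟩ := walk_strongProd hG hH
      (max (G.dist x.1 y.1) (H.dist x.2 y.2)) x.1 y.1 x.2 y.2
      (le_max_left _ _) (le_max_right _ _)
    exact ⟨p⟩
  · obtain ⟨a⟩ := hG.nonempty
    obtain ⟨b⟩ := hH.nonempty
    exact ⟨(a, b)⟩

lemma distP_le_max (hG : G.Connected) (hH : H.Connected) (a c : α) (b d : β) :
    (strongProd G H).dist (a, b) (c, d) ≤ max (G.dist a c) (H.dist b d) := by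
  obtain ⟨p, hp⟩ := walk_strongProd hG hH (max (G.dist a c) (H.dist b d)) a c b d
    (le_max_left _ _) (le_max_right _ _)
  exact le_trans (SimpleGraph.dist_le p) hp

lemma dist_fst_le_walk (hG : G.Connected) :
    ∀ {x y : α × β} (p : (strongProd G H).Walk x y), G.dist x.1 y.1 ≤ p.length := by
  intro x y p
  induction p with
  | nil => simp
  | @cons u v w h q ih =>
    rcases h.2.1 with heq | hadj
    · rw [heq, SimpleGraph.Walk.length_cons]
      omega
    · have t1 : G.dist u.1 w.1 ≤ G.dist u.1 v.1 + G.dist v.1 w.1 := hG.dist_triangle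
      have t2 : G.dist u.1 v.1 ≤ 1 := by simpa using SimpleGraph.dist_le hadj.toWalk
      rw [SimpleGraph.Walk.length_cons]
      omega

lemma dist_snd_le_walk (hH : H.Connected) :
    ∀ {x y : α × β} (p : (strongProd G H).Walk x y), H.dist x.2 y.2 ≤ p.length := by
  intro x y p
  induction p with
  | nil => simp
  | @cons u v w h q ih =>
    rcases h.2.2 with heq | hadj
    · rw [heq, SimpleGraph.Walk.length_cons]
      omega
    · have t1 : H.dist u.2 w.2 ≤ H.dist u.2 v.2 + H.dist v.2 w.2 := hH.dist_triangle
      have t2 : H.dist u.2 v.2 ≤ 1 := by simpa using SimpleGraph.dist_le hadj.toWalk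
      rw [SimpleGraph.Walk.length_cons]
      omega

lemma fst_dist_le_distP (hG : G.Connected) (hH : H.Connected) (a c : α) (b d : β) :
    G.dist a c ≤ (strongProd G H).dist (a, b) (c, d) := by
  obtain ⟨p, hp⟩ := (strongProd_connected hG hH).exists_walk_length_eq_dist (a, b) (c, d)
  calc G.dist a c ≤ p.length := dist_fst_le_walk hG p
    _ = _ := hp

lemma snd_dist_le_distP (hG : G.Connected) (hH : H.Connected) (a c : α) (b d : β) :
    H.dist b d ≤ (strongProd G H).dist (a, b) (c, d) := by
  obtain ⟨p, hp⟩ := (strongProd_connected hG hH).exists_walk_length_eq_dist (a, b) (c, d)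
  calc H.dist b d ≤ p.length := dist_snd_le_walk hH p
    _ = _ := hp

lemma distP_eq_fst (hG : G.Connected) (hH : H.Connected) (a c : α) (b : β) :
    (strongProd G H).dist (a, b) (c, b) = G.dist a c := by
  refine le_antisymm ?_ (fst_dist_le_distP hG hH a c b b)
  have := distP_le_max hG hH a c b b
  simpa [SimpleGraph.dist_self] using this

lemma distP_eq_snd (hG : G.Connected) (hH : H.Connected) (a : α) (b d : β) :
    (strongProd G H).dist (a, b) (a, d) = H.dist b d := by
  refine le_antisymm ?_ (snd_dist_le_distP hG hH a a b d)
  have := distP_le_max hG hH a a b d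
  simpa [SimpleGraph.dist_self] using this

lemma mdf_lift_fst (hG : G.Connected) (hH : H.Connected) {u v : α} (huv : u ≠ v)
    (h : MaximallyDistantFrom G u v) (b : β) :
    MaximallyDistantFrom (strongProd G H) (u, b) (v, b) := by
  rintro ⟨w, z⟩ hadj
  rw [distP_eq_fst hG hH]
  refine le_trans (distP_le_max hG hH v w b z) (max_le ?_ ?_)
  · rcases hadj.2.1 with heq | hadj1
    · obtain rfl : u = w := heq
      exact le_of_eq (SimpleGraph.dist_comm ..)
    · exact h w hadj1
  · rcases hadj.2.2 with heq | hadj2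
    · obtain rfl : b = z := heq
      simp [SimpleGraph.dist_self]
    · have h1 : H.dist b z ≤ 1 := by simpa using SimpleGraph.dist_le hadj2.toWalk
      exact le_trans h1 (hG.pos_dist_of_ne huv)

lemma mdf_lift_snd (hG : G.Connected) (hH : H.Connected) {u v : β} (huv : u ≠ v)
    (h : MaximallyDistantFrom H u v) (a : α) :
    MaximallyDistantFrom (strongProd G H) (a, u) (a, v) := by
  rintro ⟨w, z⟩ hadj
  rw [distP_eq_snd hG hH]
  refine le_trans (distP_le_max hG hH a w v z) (max_le ?_ ?_)
  · rcases hadj.2.1 with heq | hadj1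
    · obtain rfl : a = w := heq
      simp [SimpleGraph.dist_self]
    · have h1 : G.dist a w ≤ 1 := by simpa using SimpleGraph.dist_le hadj1.toWalk
      exact le_trans h1 (hH.pos_dist_of_ne huv)
  · rcases hadj.2.2 with heq | hadj2
    · obtain rfl : u = z := heq
      exact le_of_eq (SimpleGraph.dist_comm ..)
    · exact h z hadj2

lemma mmd_lift_fst (hG : G.Connected) (hH : H.Connected) {u v : α} (huv : u ≠ v)
    (h : MutuallyMaximallyDistant G u v) (b : β) :
    MutuallyMaximallyDistant (strongProd G H) (u, b) (v, b) :=
  ⟨mdf_lift_fst hG hH huv h.1 b, mdf_lift_fst hG hH (Ne.symm huv) h.2 b⟩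

lemma mmd_lift_snd (hG : G.Connected) (hH : H.Connected) {u v : β} (huv : u ≠ v)
    (h : MutuallyMaximallyDistant H u v) (a : α) :
    MutuallyMaximallyDistant (strongProd G H) (a, u) (a, v) :=
  ⟨mdf_lift_snd hG hH huv h.1 a, mdf_lift_snd hG hH (Ne.symm huv) h.2 a⟩

end Prod

section Count

variable {G : SimpleGraph α} {H : SimpleGraph β}

lemma univ_isStrongMetricGenerator (G : SimpleGraph α) [Fintype α] :
    IsStrongMetricGenerator G Finset.univ := by
  intro u v _
  exact ⟨u, Finset.mem_univ u, Or.inr (by simp [SimpleGraph.dist_self])⟩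

lemma sdim_le_card_of_generator [Fintype α] {s : Finset α}
    (hs : IsStrongMetricGenerator G s) : sdim G ≤ s.card :=
  Nat.sInf_le ⟨s, hs, rfl⟩

lemma fiber_fst_generator [Fintype α] [Fintype β] [DecidableEq α] [DecidableEq β]
    (hG : G.Connected) (hH : H.Connected) {W : Finset (α × β)}
    (hW : IsStrongMetricGenerator (strongProd G H) W) (b : β) :
    IsStrongMetricGenerator G ((W.filter (fun p => p.2 = b)).image Prod.fst) := by
  intro x y hxy
  obtain ⟨u, v, huv, hmmd, hux, hvx⟩ := exists_mmd_pair hG hxy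
  obtain ⟨w', hw'W, hres⟩ := hW (u, b) (v, b) (fun hcon => huv (congrArg Prod.fst hcon))
  rcases eq_of_stronglyResolves_mmd (strongProd_connected hG hH)
      (mmd_lift_fst hG hH huv hmmd b) hres with rfl | rfl
  · exact ⟨u, Finset.mem_image.mpr ⟨(u, b), Finset.mem_filter.mpr ⟨hw'W, rfl⟩, rfl⟩,
      Or.inr hux⟩
  · exact ⟨v, Finset.mem_image.mpr ⟨(v, b), Finset.mem_filter.mpr ⟨hw'W, rfl⟩, rfl⟩,
      Or.inl hvx⟩

lemma fiber_snd_generator [Fintype α] [Fintype β] [DecidableEq α] [DecidableEq β]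
    (hG : G.Connected) (hH : H.Connected) {W : Finset (α × β)}
    (hW : IsStrongMetricGenerator (strongProd G H) W) (a : α) :
    IsStrongMetricGenerator H ((W.filter (fun p => p.1 = a)).image Prod.snd) := by
  intro x y hxy
  obtain ⟨u, v, huv, hmmd, hux, hvx⟩ := exists_mmd_pair hH hxy
  obtain ⟨w', hw'W, hres⟩ := hW (a, u) (a, v) (fun hcon => huv (congrArg Prod.snd hcon))
  rcases eq_of_stronglyResolves_mmd (strongProd_connected hG hH)
      (mmd_lift_snd hG hH huv hmmd a) hres with rfl | rfl
  · exact ⟨u, Finset.mem_image.mpr ⟨(a, u), Finset.mem_filter.mpr ⟨hw'W, rfl⟩, rfl⟩,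
      Or.inr hux⟩
  · exact ⟨v, Finset.mem_image.mpr ⟨(a, v), Finset.mem_filter.mpr ⟨hw'W, rfl⟩, rfl⟩,
      Or.inl hvx⟩

lemma count_fst [Fintype α] [Fintype β] [DecidableEq α] [DecidableEq β]
    (hG : G.Connected) (hH : H.Connected) {W : Finset (α × β)}
    (hW : IsStrongMetricGenerator (strongProd G H) W) :
    Fintype.card β * sdim G ≤ W.card := by
  have hcard : W.card = ∑ b : β, (W.filter (fun p => p.2 = b)).card :=
    Finset.card_eq_sum_card_fiberwise (fun x _ => Finset.mem_univ x.2)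
  rw [hcard]
  calc Fintype.card β * sdim G = ∑ _b : β, sdim G := by
        simp [Finset.sum_const, mul_comm]
    _ ≤ ∑ b : β, (W.filter (fun p => p.2 = b)).card := by
        refine Finset.sum_le_sum fun b _ => ?_
        calc sdim G ≤ ((W.filter (fun p => p.2 = b)).image Prod.fst).card :=
              sdim_le_card_of_generator (fiber_fst_generator hG hH hW b)
          _ ≤ (W.filter (fun p => p.2 = b)).card := Finset.card_image_le

lemma count_snd [Fintype α] [Fintype β] [DecidableEq α] [DecidableEq β]
    (hG : G.Connected) (hH : H.Connected) {W : Finset (α × β)}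
    (hW : IsStrongMetricGenerator (strongProd G H) W) :
    Fintype.card α * sdim H ≤ W.card := by
  have hcard : W.card = ∑ a : α, (W.filter (fun p => p.1 = a)).card :=
    Finset.card_eq_sum_card_fiberwise (fun x _ => Finset.mem_univ x.1)
  rw [hcard]
  calc Fintype.card α * sdim H = ∑ _a : α, sdim H := by
        simp [Finset.sum_const, mul_comm]
    _ ≤ ∑ a : α, (W.filter (fun p => p.1 = a)).card := by
        refine Finset.sum_le_sum fun a _ => ?_
        calc sdim H ≤ ((W.filter (fun p => p.1 = a)).image Prod.snd).card :=
              sdim_le_card_of_generator (fiber_snd_generator hG hH hW a)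
          _ ≤ (W.filter (fun p => p.1 = a)).card := Finset.card_image_le

end Count

theorem sdim_strongProd_lower_bound [Fintype α] [Fintype β]
    (G : SimpleGraph α) (H : SimpleGraph β)
    (hG : G.Connected) (hGn : Nontrivial α) (hH : H.Connected) (hHn : Nontrivial β) :
    sdim (strongProd G H) ≥
      max (Fintype.card β * sdim G) (Fintype.card α * sdim H) := by
  classical
  rw [ge_iff_le, sdim]
  refine le_csInf ⟨Finset.univ.card, Finset.univ,
    univ_isStrongMetricGenerator (strongProd G H), rfl⟩ ?_
  rintro n ⟨W, hW, rfl⟩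
  exact max_le (count_fst hG hH hW) (count_snd hG hH hW)
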